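/- For A > 0 define h_A : ℝ^d → ℝ by h_A(x) = √(1 − exp(−A|x|²)). Then h_A is differentiable on ℝ^d ∖ {0} with ∇h_A(x) = A x exp(−A|x|²)(1 − exp(−A|x|²))^{−1/2}, and for every p ∈ [1,∞) and d ∈ ℕ there exists c_{p,d} ∈ (0,∞) such that for every A > 0, (∫_{ℝ^d} |∇h_A(x)|^p dx)^{1/p} ≤ c_{p,d} A^{1/2 − d/(2p)}. Moreover there exists c_d ∈ (0,∞) such that sup_{x ≠ 0} |∇h_A(x)| ≤ c_d A^{1/2} for every A > 0. -/

import Mathlib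

open MeasureTheory

/-- The spatial cutoff `h_A(x) = √(1 − exp(−A|x|²))`. -/
noncomputable def hcut (d : ℕ) (A : ℝ) (x : EuclideanSpace ℝ (Fin d)) : ℝ :=
  Real.sqrt (1 - Real.exp (-A * ‖x‖ ^ 2))

lemma hcut_grad {d : ℕ} {A : ℝ} (hA : 0 < A) {x : EuclideanSpace ℝ (Fin d)} (hx : x ≠ 0) :
    HasGradientAt (hcut d A)
      ((A * Real.exp (-A * ‖x‖ ^ 2) * (1 - Real.exp (-A * ‖x‖ ^ 2)) ^ (-(1:ℝ)/2)) • x) x := by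
  have hxn : ‖x‖ ≠ 0 := norm_ne_zero_iff.mpr hx
  have hr : 0 < ‖x‖ ^ 2 := by positivity
  have hE : Real.exp (-A * ‖x‖ ^ 2) < 1 := by
    rw [show (1:ℝ) = Real.exp 0 by simp, Real.exp_lt_exp]; nlinarith
  have hs : 0 < 1 - Real.exp (-A * ‖x‖ ^ 2) := by linarith
  have hn : HasFDerivAt (fun y : EuclideanSpace ℝ (Fin d) => ‖y‖ ^ 2) (2 • (innerSL ℝ x)) x := by
    simpa using (hasFDerivAt_id x).norm_sq
  have h1 : HasFDerivAt (fun y : EuclideanSpace ℝ (Fin d) => 1 - Real.exp (-A * ‖y‖ ^ 2))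
      ((-(Real.exp (-A * ‖x‖ ^ 2))) • ((-A) • (2 • (innerSL ℝ x)))) x := by
    have := ((hn.const_mul (-A)).exp).const_sub 1
    rw [neg_smul]
    exact this
  have h2 := h1.sqrt hs.ne'
  rw [hasGradientAt_iff_hasFDerivAt]
  refine h2.congr_fderiv ?_
  ext y
  have hcoef : A * Real.exp (-A * ‖x‖ ^ 2) * (1 - Real.exp (-A * ‖x‖ ^ 2)) ^ (-(1:ℝ)/2)
      = 1 / (2 * Real.sqrt (1 - Real.exp (-A * ‖x‖ ^ 2))) * (-(Real.exp (-A * ‖x‖ ^ 2)) * (-A * 2)) := by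
    rw [show (-(1:ℝ)/2) = -(1/2) by ring, Real.rpow_neg hs.le, ← Real.sqrt_eq_rpow]
    have hss : Real.sqrt (1 - Real.exp (-A * ‖x‖ ^ 2)) ≠ 0 := by positivity
    field_simp
  simp only [InnerProductSpace.toDual_apply_apply, ContinuousLinearMap.smul_apply,
    ContinuousLinearMap.coe_smul', Pi.smul_apply, smul_eq_mul, real_inner_smul_left]
  rw [hcoef]
  simp [innerSL_apply_apply]
  ring

lemma coef_bd {A t : ℝ} (hA : 0 < A) (ht : 0 < t) :
    A * Real.exp (-A * t) * (1 - Real.exp (-A * t)) ^ (-(1:ℝ)/2) * Real.sqrt t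
      ≤ Real.sqrt A * Real.exp (-(A * t) / 2) := by
  have hu : 0 < A * t := mul_pos hA ht
  have hE : 0 < Real.exp (-A * t) := Real.exp_pos _
  have hmul : Real.exp (-A * t) * Real.exp (A * t) = 1 := by
    rw [← Real.exp_add]; simp
  have h1 := Real.add_one_le_exp (A * t)
  have hs : A * t * Real.exp (-A * t) ≤ 1 - Real.exp (-A * t) := by nlinarith
  have hs0 : 0 < 1 - Real.exp (-A * t) := lt_of_lt_of_le (by positivity) hs
  have hsqe : Real.sqrt (Real.exp (-A * t)) = Real.exp (-(A * t) / 2) := by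
    rw [show -(A*t)/2 = (-A*t)/2 by ring, Real.exp_half]
  have hrw : (1 - Real.exp (-A * t)) ^ (-(1:ℝ)/2)
      = (Real.sqrt (1 - Real.exp (-A * t)))⁻¹ := by
    rw [show (-(1:ℝ)/2) = -(1/2) by ring, Real.rpow_neg hs0.le, ← Real.sqrt_eq_rpow]
  rw [hrw]
  have hinv : (Real.sqrt (1 - Real.exp (-A * t)))⁻¹
      ≤ (Real.sqrt (A * t * Real.exp (-A * t)))⁻¹ := by
    apply inv_anti₀ (by positivity)
    exact Real.sqrt_le_sqrt hs
  have hsplit : Real.sqrt (A * t * Real.exp (-A * t))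
      = Real.sqrt A * Real.sqrt t * Real.sqrt (Real.exp (-A * t)) := by
    rw [Real.sqrt_mul (by positivity), Real.sqrt_mul hA.le]
  calc A * Real.exp (-A * t) * (Real.sqrt (1 - Real.exp (-A * t)))⁻¹ * Real.sqrt t
      ≤ A * Real.exp (-A * t) * (Real.sqrt (A * t * Real.exp (-A * t)))⁻¹ * Real.sqrt t := by
        have : 0 ≤ A * Real.exp (-A * t) := by positivity
        gcongr
    _ = Real.sqrt A * Real.exp (-(A * t) / 2) := by
        rw [hsplit, ← hsqe]
        have ha : Real.sqrt A ≠ 0 := (Real.sqrt_pos.mpr hA).ne'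
        have hb : Real.sqrt t ≠ 0 := (Real.sqrt_pos.mpr ht).ne'
        have hc : Real.sqrt (Real.exp (-A * t)) ≠ 0 := (Real.sqrt_pos.mpr hE).ne'
        have hA2 : A = Real.sqrt A * Real.sqrt A := (Real.mul_self_sqrt hA.le).symm
        have hE2 : Real.exp (-A * t) = Real.sqrt (Real.exp (-A * t)) * Real.sqrt (Real.exp (-A * t)) :=
          (Real.mul_self_sqrt hE.le).symm
        have key : ∀ a b c : ℝ, a ≠ 0 → b ≠ 0 → c ≠ 0 → a * a * (c * c) * (a * b * c)⁻¹ * b = a * c := by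
          intro a b c h1 h2 h3; field_simp
        nth_rewrite 1 [hA2]
        nth_rewrite 1 [hE2]
        exact key _ _ _ ha hb hc

lemma grad_norm_le {d : ℕ} {A : ℝ} (hA : 0 < A) {x : EuclideanSpace ℝ (Fin d)} (hx : x ≠ 0) :
    ‖gradient (hcut d A) x‖ ≤ Real.sqrt A * Real.exp (-(A * ‖x‖ ^ 2) / 2) := by
  rw [(hcut_grad hA hx).gradient]
  have hxn : 0 < ‖x‖ := norm_pos_iff.mpr hx
  have hr : 0 < ‖x‖ ^ 2 := by positivity
  have hE : Real.exp (-A * ‖x‖ ^ 2) < 1 := by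
    rw [show (1:ℝ) = Real.exp 0 by simp, Real.exp_lt_exp]; nlinarith
  have hs : 0 < 1 - Real.exp (-A * ‖x‖ ^ 2) := by linarith
  have hcnn : 0 ≤ A * Real.exp (-A * ‖x‖ ^ 2) * (1 - Real.exp (-A * ‖x‖ ^ 2)) ^ (-(1:ℝ)/2) := by
    have := Real.rpow_nonneg hs.le (-(1:ℝ)/2)
    positivity
  rw [norm_smul, Real.norm_eq_abs, abs_of_nonneg hcnn]
  have := coef_bd hA hr
  rwa [Real.sqrt_sq (norm_nonneg x)] at this

lemma gauss_int {d : ℕ} {b : ℝ} (hb : 0 < b) :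
    ∫ v : EuclideanSpace ℝ (Fin d), Real.exp (-b * ‖v‖ ^ 2)
      = (Real.pi / b) ^ ((d : ℝ) / 2) := by
  simpa [finrank_euclideanSpace_fin] using
    GaussianFourier.integral_rexp_neg_mul_sq_norm (V := EuclideanSpace ℝ (Fin d)) hb

lemma gauss_integrable {d : ℕ} {b : ℝ} (hb : 0 < b) :
    Integrable (fun v : EuclideanSpace ℝ (Fin d) => Real.exp (-b * ‖v‖ ^ 2)) := by
  have h := (GaussianFourier.integrable_cexp_neg_mul_sq_norm_add_of_euclideanSpace
    (b := (b : ℂ)) (by simpa using hb) 0 (0 : EuclideanSpace ℝ (Fin d))).norm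
  refine h.congr ?_
  filter_upwards with v
  rw [Complex.norm_exp]
  norm_num
  left
  norm_cast

lemma lp_bd {d : ℕ} (hd : 0 < d) {p A : ℝ} (hp : 1 ≤ p) (hA : 0 < A) :
    (∫⁻ x : EuclideanSpace ℝ (Fin d), ENNReal.ofReal (‖gradient (hcut d A) x‖ ^ p))
      ≤ ENNReal.ofReal ((2 * Real.pi / p) ^ ((d:ℝ)/2) * A ^ (p/2 - (d:ℝ)/2)) := by
  have hp0 : 0 < p := lt_of_lt_of_le one_pos hp
  set b : ℝ := p * A / 2 with hbdef
  have hb : 0 < b := by positivity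
  set C : ℝ := Real.sqrt A ^ p with hCdef
  haveI : Nontrivial (EuclideanSpace ℝ (Fin d)) :=
    Module.nontrivial_of_finrank_pos (R := ℝ) (by simpa [finrank_euclideanSpace_fin] using hd)
  have h0 : ∀ᵐ x : EuclideanSpace ℝ (Fin d), x ≠ 0 := by
    have hz : volume ({0} : Set (EuclideanSpace ℝ (Fin d))) = 0 := measure_singleton 0
    rw [Filter.eventually_iff, mem_ae_iff]
    convert hz using 2
    ext y; simp
  have step1 : (∫⁻ x : EuclideanSpace ℝ (Fin d), ENNReal.ofReal (‖gradient (hcut d A) x‖ ^ p))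
      ≤ ∫⁻ x : EuclideanSpace ℝ (Fin d), ENNReal.ofReal (C * Real.exp (-b * ‖x‖ ^ 2)) := by
    apply lintegral_mono_ae
    filter_upwards [h0] with x hx
    apply ENNReal.ofReal_le_ofReal
    calc ‖gradient (hcut d A) x‖ ^ p
        ≤ (Real.sqrt A * Real.exp (-(A * ‖x‖ ^ 2) / 2)) ^ p :=
          Real.rpow_le_rpow (norm_nonneg _) (grad_norm_le hA hx) hp0.le
      _ = C * Real.exp (-b * ‖x‖ ^ 2) := by
          rw [Real.mul_rpow (Real.sqrt_nonneg _) (Real.exp_pos _).le, ← Real.exp_mul, hCdef]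
          congr 1
          rw [hbdef]; ring_nf
  have step2 : (∫⁻ x : EuclideanSpace ℝ (Fin d), ENNReal.ofReal (C * Real.exp (-b * ‖x‖ ^ 2)))
      = ENNReal.ofReal (C * (Real.pi / b) ^ ((d:ℝ)/2)) := by
    rw [← ofReal_integral_eq_lintegral_ofReal ((gauss_integrable hb).const_mul C)
      (Filter.Eventually.of_forall (fun x => by positivity))]
    rw [integral_const_mul, gauss_int hb]
  have key : C * (Real.pi / b) ^ ((d:ℝ)/2)
      = (2 * Real.pi / p) ^ ((d:ℝ)/2) * A ^ (p/2 - (d:ℝ)/2) := by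
    have hdiv : Real.pi / b = (2 * Real.pi / p) * A⁻¹ := by
      rw [hbdef]; field_simp
    rw [hCdef, hdiv, Real.mul_rpow (by positivity) (by positivity),
      Real.inv_rpow hA.le, ← Real.rpow_neg_one (A ^ ((d:ℝ)/2)), ← Real.rpow_mul hA.le,
      Real.sqrt_eq_rpow, ← Real.rpow_mul hA.le,
      show p/2 - (d:ℝ)/2 = 1/2 * p + (d:ℝ)/2 * (-1) by ring, Real.rpow_add hA]
    ring
  calc _ ≤ _ := step1
    _ = _ := step2
    _ = _ := by rw [key]

/-- `h_A` is differentiable away from the origin with gradient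
`A x exp(−A|x|²)(1 − exp(−A|x|²))^{−1/2}`, its gradient satisfies the `L^p` bound
`‖∇h_A‖_{L^p} ≤ c_{p,d} A^{1/2 − d/(2p)}`, and the uniform bound
`|∇h_A(x)| ≤ c_d A^{1/2}`. -/
theorem stmt8 (d : ℕ) :
    (∀ A : ℝ, 0 < A → ∀ x : EuclideanSpace ℝ (Fin d), x ≠ 0 →
      HasGradientAt (hcut d A)
        ((A * Real.exp (-A * ‖x‖ ^ 2) * (1 - Real.exp (-A * ‖x‖ ^ 2)) ^ (-(1:ℝ)/2)) • x)
        x) ∧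
    (∀ p : ℝ, 1 ≤ p → ∃ c : ℝ, 0 < c ∧ ∀ A : ℝ, 0 < A →
      (∫⁻ x : EuclideanSpace ℝ (Fin d),
          ENNReal.ofReal (‖gradient (hcut d A) x‖ ^ p)) ^ (1/p)
        ≤ ENNReal.ofReal (c * A ^ ((1:ℝ)/2 - (d:ℝ)/(2*p)))) ∧
    (∃ c : ℝ, 0 < c ∧ ∀ A : ℝ, 0 < A → ∀ x : EuclideanSpace ℝ (Fin d), x ≠ 0 →
      ‖gradient (hcut d A) x‖ ≤ c * A ^ ((1:ℝ)/2)) := by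
  refine ⟨fun A hA x hx => hcut_grad hA hx, ?_, ?_⟩
  · intro p hp
    have hp0 : 0 < p := lt_of_lt_of_le one_pos hp
    refine ⟨(2 * Real.pi / p) ^ ((d:ℝ)/(2*p)),
      Real.rpow_pos_of_pos (by positivity) _, ?_⟩
    intro A hA
    rcases Nat.eq_zero_or_pos d with hd | hd
    · subst hd
      have hz : ∀ x : EuclideanSpace ℝ (Fin 0),
          ENNReal.ofReal (‖gradient (hcut 0 A) x‖ ^ p) = 0 := by
        intro x
        have hfun : hcut 0 A = fun _ : EuclideanSpace ℝ (Fin 0) => (0:ℝ) := by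
          funext y
          have hy : ‖y‖ = 0 := by simp [EuclideanSpace.norm_eq]
          simp [hcut, hy]
        rw [hfun, gradient_fun_const]
        simp [Real.zero_rpow hp0.ne']
      simp only [hz]
      rw [lintegral_zero, ENNReal.zero_rpow_of_pos (by positivity)]
      exact zero_le
    · have h := lp_bd hd hp hA
      have h2 := ENNReal.rpow_le_rpow h (by positivity : (0:ℝ) ≤ 1/p)
      refine le_trans h2 ?_
      rw [ENNReal.ofReal_rpow_of_nonneg (by positivity) (by positivity)]
      apply ENNReal.ofReal_le_ofReal
      rw [Real.mul_rpow (by positivity) (by positivity),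
        ← Real.rpow_mul (by positivity), ← Real.rpow_mul hA.le,
        show (d:ℝ)/2 * (1/p) = (d:ℝ)/(2*p) by field_simp,
        show (p/2 - (d:ℝ)/2) * (1/p) = 1/2 - (d:ℝ)/(2*p) by field_simp]
  · refine ⟨1, one_pos, fun A hA x hx => ?_⟩
    rw [one_mul, show A ^ ((1:ℝ)/2) = Real.sqrt A by rw [Real.sqrt_eq_rpow]]
    calc ‖gradient (hcut d A) x‖ ≤ Real.sqrt A * Real.exp (-(A * ‖x‖ ^ 2) / 2) :=
          grad_norm_le hA hx
      _ ≤ Real.sqrt A * 1 := by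
          gcongr
          have h1 : 0 ≤ A * ‖x‖ ^ 2 := by positivity
          exact Real.exp_le_one_iff.mpr (by linarith)
      _ = Real.sqrt A := mul_one _
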